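/- arXiv:1307.0648 — 2 statements merged into one kernel-verified Lean document; each statement's English description precedes it below -/
import Mathlib

section
/- Let q ≥ 2 and k ≥ 1 be integers, and for a natural number a define D(a) to be the minimal value of S = Σ_{i=0}^{k-1} a_i + Σ_{i=0}^{k-1} b_i over all tuples of natural numbers (a_i), (b_i) such that a ≡ Σ_{i=0}^{k-1} a_i q^i − Σ_{i=0}^{k-1} b_i q^i (mod q^k − 1). Then for every natural number d, D((q−1)·d) ≤ 2·D(d). -/
/-- `D q k a` is the minimal total weight `∑ aᵢ + ∑ bᵢ` over signed base-`q`
representations `a ≡ ∑ aᵢ qⁱ - ∑ bᵢ qⁱ (mod q^k - 1)` with nonnegative integer digits. -/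
noncomputable def D (q k a : ℕ) : ℕ :=
  sInf {S : ℕ | ∃ A B : Fin k → ℕ, S = (∑ i, A i) + (∑ i, B i) ∧
    (a : ZMod (q ^ k - 1)) =
      (∑ i : Fin k, (A i : ZMod (q ^ k - 1)) * (q : ZMod (q ^ k - 1)) ^ (i : ℕ)) -
        ∑ i : Fin k, (B i : ZMod (q ^ k - 1)) * (q : ZMod (q ^ k - 1)) ^ (i : ℕ)}

theorem D_q_sub_one_mul_le (q k : ℕ) (hq : 2 ≤ q) (hk : 1 ≤ k) (d : ℕ) :
    D q k ((q - 1) * d) ≤ 2 * D q k d := by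
  haveI : NeZero k := ⟨by omega⟩
  have hqk : 1 ≤ q ^ k := Nat.one_le_pow _ _ (by omega)
  have hq1 : (q : ZMod (q ^ k - 1)) ^ k = 1 := by
    have h : ((q ^ k : ℕ) : ZMod (q ^ k - 1)) = ((q ^ k - 1 + 1 : ℕ) : ZMod (q ^ k - 1)) := by
      congr 1; omega
    push_cast at h
    rwa [ZMod.natCast_self, zero_add] at h
  have hpowmod : ∀ m : ℕ, (q : ZMod (q ^ k - 1)) ^ (m % k) = (q : ZMod (q ^ k - 1)) ^ m := by
    intro m
    conv_rhs => rw [← Nat.mod_add_div m k]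
    rw [pow_add, pow_mul, hq1, one_pow, mul_one]
  have hne : {S : ℕ | ∃ A B : Fin k → ℕ, S = (∑ i, A i) + (∑ i, B i) ∧
      (d : ZMod (q ^ k - 1)) =
        (∑ i : Fin k, (A i : ZMod (q ^ k - 1)) * (q : ZMod (q ^ k - 1)) ^ (i : ℕ)) -
          ∑ i : Fin k, (B i : ZMod (q ^ k - 1)) * (q : ZMod (q ^ k - 1)) ^ (i : ℕ)}.Nonempty := by
    refine ⟨d, fun i => if i = 0 then d else 0, fun _ => 0, ?_, ?_⟩
    · simp
    · simp only [apply_ite (Nat.cast : ℕ → ZMod (q ^ k - 1)), Nat.cast_zero, ite_mul, zero_mul,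
        Finset.sum_ite_eq' Finset.univ (0 : Fin k)]
      simp
  have hmem : D q k d ∈ {S : ℕ | ∃ A B : Fin k → ℕ, S = (∑ i, A i) + (∑ i, B i) ∧
      (d : ZMod (q ^ k - 1)) =
        (∑ i : Fin k, (A i : ZMod (q ^ k - 1)) * (q : ZMod (q ^ k - 1)) ^ (i : ℕ)) -
          ∑ i : Fin k, (B i : ZMod (q ^ k - 1)) * (q : ZMod (q ^ k - 1)) ^ (i : ℕ)} :=
    Nat.sInf_mem hne
  obtain ⟨A, B, hS, hcong⟩ := hmem
  -- shift lemma: multiplying by q cyclically shifts digits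
  have shift : ∀ f : Fin k → ℕ,
      (∑ i : Fin k, (f (i - 1) : ZMod (q ^ k - 1)) * (q : ZMod (q ^ k - 1)) ^ (i : ℕ)) =
        (q : ZMod (q ^ k - 1)) * ∑ i : Fin k, (f i : ZMod (q ^ k - 1)) *
          (q : ZMod (q ^ k - 1)) ^ (i : ℕ) := by
    intro f
    rw [Finset.mul_sum,
      ← Equiv.sum_comp (Equiv.addRight (1 : Fin k))
        (fun i : Fin k => (f (i - 1) : ZMod (q ^ k - 1)) * (q : ZMod (q ^ k - 1)) ^ (i : ℕ))]
    refine Finset.sum_congr rfl fun j _ => ?_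
    simp only [Equiv.coe_addRight, add_sub_cancel_right]
    have hval : ((j + 1 : Fin k) : ℕ) = (j.val + 1) % k := by
      rw [Fin.add_def]; simp
    rw [hval, hpowmod, pow_succ]
    ring
  have hsumshift : ∀ f : Fin k → ℕ, (∑ i : Fin k, f (i - 1)) = ∑ i : Fin k, f i := by
    intro f
    rw [← Equiv.sum_comp (Equiv.addRight (1 : Fin k)) (fun i : Fin k => f (i - 1))]
    simp
  have hmem2 : 2 * D q k d ∈ {S : ℕ | ∃ A B : Fin k → ℕ, S = (∑ i, A i) + (∑ i, B i) ∧
      (((q - 1) * d : ℕ) : ZMod (q ^ k - 1)) =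
        (∑ i : Fin k, (A i : ZMod (q ^ k - 1)) * (q : ZMod (q ^ k - 1)) ^ (i : ℕ)) -
          ∑ i : Fin k, (B i : ZMod (q ^ k - 1)) * (q : ZMod (q ^ k - 1)) ^ (i : ℕ)} := by
    refine ⟨fun i => A (i - 1) + B i, fun i => B (i - 1) + A i, ?_, ?_⟩
    · rw [hS]
      simp only [Finset.sum_add_distrib, hsumshift A, hsumshift B]
      ring
    · have hcast : (((q - 1) * d : ℕ) : ZMod (q ^ k - 1)) =
          ((q : ZMod (q ^ k - 1)) - 1) * (d : ZMod (q ^ k - 1)) := by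
        rw [Nat.cast_mul, Nat.cast_sub (by omega : 1 ≤ q), Nat.cast_one]
      rw [hcast]
      simp only [Nat.cast_add, add_mul, Finset.sum_add_distrib]
      rw [shift A, shift B, hcong]
      ring
  exact Nat.sInf_le hmem2
end

section
/- Let H₁, H₂ be additive groups and H_r a multiplicative group, all of prime order r, and let e₁, e₂ : H₁ × H₂ → H_r be non-degenerate bilinear pairings (for each fixed non-identity element of one argument, the induced map in the other argument is a group isomorphism onto H_r). Suppose we can invert each pairing in its first and second arguments. Then given Y, [A]Y, [B]Y ∈ H₁ with Y ≠ 0, the element [AB]Y is determined; formally: fix any non-identity U ∈ H₂, let z = e₁([A]Y, U), let V ∈ H₂ be the unique element with e₁(Y, V) = z, let w = e₂([B]Y, V), and let W ∈ H₁ be the unique element with e₂(W, U) = w. Then W = [A·B]Y. -/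
private lemma hom_zsmul {M G : Type*} [AddCommGroup M] [CommGroup G]
    (f : M → G) (hf : ∀ x y, f (x + y) = f x * f y) (n : ℤ) (x : M) :
    f (n • x) = f x ^ n := by
  let φ : M →+ Additive G := AddMonoidHom.mk' (fun x => Additive.ofMul (f x)) (by
    intro a b; exact hf a b)
  have := map_zsmul φ n x
  exact this

/-- Solving the Diffie–Hellman problem via two pairing inversions: with `V` obtained by
inverting `e₁(Y, ·)` at `e₁([A]Y, U)` and `W` obtained by inverting `e₂(·, U)` at
`e₂([B]Y, V)`, one has `W = [A·B]Y`. -/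
theorem diffie_hellman_via_pairing_inversion
    {H₁ H₂ Hr : Type*} [AddCommGroup H₁] [AddCommGroup H₂] [CommGroup Hr]
    (r : ℕ) (hr : r.Prime)
    (hcard₁ : Nat.card H₁ = r) (hcard₂ : Nat.card H₂ = r) (hcardr : Nat.card Hr = r)
    (e₁ e₂ : H₁ → H₂ → Hr)
    -- bilinearity of e₁ and e₂
    (he₁l : ∀ x y u, e₁ (x + y) u = e₁ x u * e₁ y u)
    (he₁r : ∀ x u v, e₁ x (u + v) = e₁ x u * e₁ x v)
    (he₂l : ∀ x y u, e₂ (x + y) u = e₂ x u * e₂ y u)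
    (he₂r : ∀ x u v, e₂ x (u + v) = e₂ x u * e₂ x v)
    -- non-degeneracy: fixing a non-identity element in one slot gives an isomorphism
    (hnd₁l : ∀ P : H₁, P ≠ 0 → Function.Bijective (fun Q => e₁ P Q))
    (hnd₁r : ∀ Q : H₂, Q ≠ 0 → Function.Bijective (fun P => e₁ P Q))
    (hnd₂l : ∀ P : H₁, P ≠ 0 → Function.Bijective (fun Q => e₂ P Q))
    (hnd₂r : ∀ Q : H₂, Q ≠ 0 → Function.Bijective (fun P => e₂ P Q))
    (A B : ℤ) (Y : H₁) (hY : Y ≠ 0) (U : H₂) (hU : U ≠ 0)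
    (V : H₂) (hV : e₁ Y V = e₁ (A • Y) U)
    (W : H₁) (hW : e₂ W U = e₂ (B • Y) V) :
    W = (A * B) • Y := by
  have hVA : V = A • U := by
    apply (hnd₁l Y hY).injective
    show e₁ Y V = e₁ Y (A • U)
    rw [hV, hom_zsmul (fun Q => e₁ Y Q) (he₁r Y) A U,
      hom_zsmul (fun P => e₁ P U) (fun x y => he₁l x y U) A Y]
  apply (hnd₂r U hU).injective
  show e₂ W U = e₂ ((A * B) • Y) U
  rw [hW, hVA, hom_zsmul (fun Q => e₂ (B • Y) Q) (he₂r (B • Y)) A U,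
    hom_zsmul (fun P => e₂ P U) (fun x y => he₂l x y U) B Y,
    hom_zsmul (fun P => e₂ P U) (fun x y => he₂l x y U) (A * B) Y,
    ← zpow_mul, mul_comm B A]
end
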